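/- Let P : Ω → 𝒫 and F : Ω → ℱ be random variables on a finite probability space (Ω, ℙ), with 𝒫 and ℱ finite, and assume ℙ(P = p) > 0 for every p ∈ 𝒫. Then the conditional entropy of the future given the past equals the conditional entropy of the future given the causal state: H[F | P] = H[F | ε∘P]. -/
import Mathlib


open scoped BigOperators
attribute [local instance] Classical.propDecidable

/-- Probability of an event on a finite probability space given by a weight function. -/
noncomputable def prb {Ω : Type*} [Fintype Ω] (μ : Ω → ℝ) (E : Set Ω) : ℝ :=
  ∑ ω, if ω ∈ E then μ ω else 0

/-- The distribution of a random variable `X`. -/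
noncomputable def pdist {Ω α : Type*} [Fintype Ω] (μ : Ω → ℝ) (X : Ω → α) (x : α) : ℝ :=
  prb μ {ω | X ω = x}

/-- Shannon entropy `H[X]` (in nats; `Real.log 0 = 0` gives the convention `0·log 0 = 0`). -/
noncomputable def Hent {Ω α : Type*} [Fintype Ω] [Fintype α] (μ : Ω → ℝ) (X : Ω → α) : ℝ :=
  -∑ x, pdist μ X x * Real.log (pdist μ X x)

/-- Mutual information `I[X;Y] = H[X] + H[Y] - H[X,Y]`. -/
noncomputable def Iinfo {Ω α β : Type*} [Fintype Ω] [Fintype α] [Fintype β]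
    (μ : Ω → ℝ) (X : Ω → α) (Y : Ω → β) : ℝ :=
  Hent μ X + Hent μ Y - Hent μ (fun ω => (X ω, Y ω))

/-- Conditional entropy `H[X|Y] = H[X,Y] - H[Y]`. -/
noncomputable def condH {Ω α β : Type*} [Fintype Ω] [Fintype α] [Fintype β]
    (μ : Ω → ℝ) (X : Ω → α) (Y : Ω → β) : ℝ :=
  Hent μ (fun ω => (X ω, Y ω)) - Hent μ Y

/-- Conditional probability `ℙ(E | F)`. -/
noncomputable def cprob {Ω : Type*} [Fintype Ω] (μ : Ω → ℝ) (E F : Set Ω) : ℝ :=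
  prb μ (E ∩ F) / prb μ F

/-- Causal equivalence of pasts: `p ∼ p'` iff they give the same conditional
distribution over futures. -/
def CausalEquiv {Ω Pst Fut : Type*} [Fintype Ω] (μ : Ω → ℝ)
    (P : Ω → Pst) (F : Ω → Fut) (p p' : Pst) : Prop :=
  ∀ f : Fut, cprob μ {ω | F ω = f} {ω | P ω = p} = cprob μ {ω | F ω = f} {ω | P ω = p'}

/-- Causal equivalence as a setoid on the space of pasts. -/
def causalSetoid {Ω Pst Fut : Type*} [Fintype Ω] (μ : Ω → ℝ)
    (P : Ω → Pst) (F : Ω → Fut) : Setoid Pst where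
  r := CausalEquiv μ P F
  iseqv := ⟨fun _ _ => rfl, fun h f => (h f).symm, fun h h' f => (h f).trans (h' f)⟩

/-- The causal state map `ε` sends a past to its causal equivalence class. -/
def causalState {Ω Pst Fut : Type*} [Fintype Ω] (μ : Ω → ℝ)
    (P : Ω → Pst) (F : Ω → Fut) (p : Pst) : Quotient (causalSetoid μ P F) :=
  Quotient.mk (causalSetoid μ P F) p

/- ### Auxiliary lemmas -/

lemma pdist_nonneg {Ω α : Type*} [Fintype Ω] {μ : Ω → ℝ} (hμ0 : ∀ ω, 0 ≤ μ ω)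
    (X : Ω → α) (x : α) : 0 ≤ pdist μ X x :=
  Finset.sum_nonneg fun ω _ => by by_cases h : X ω = x <;> simp [prb, h, hμ0 ω]

lemma pdist_pair_eq_prb_inter {Ω α β : Type*} [Fintype Ω] (μ : Ω → ℝ)
    (X : Ω → α) (Y : Ω → β) (x : α) (y : β) :
    pdist μ (fun ω => (X ω, Y ω)) (x, y) = prb μ ({ω | X ω = x} ∩ {ω | Y ω = y}) := by
  unfold pdist prb
  refine Finset.sum_congr rfl fun ω _ => ?_
  simp [Prod.ext_iff, Set.mem_setOf_eq]

lemma marginal {Ω α β : Type*} [Fintype Ω] [Fintype α] [Fintype β] (μ : Ω → ℝ)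
    (X : Ω → α) (Y : Ω → β) (y : β) :
    ∑ x, pdist μ (fun ω => (X ω, Y ω)) (x, y) = pdist μ Y y := by
  unfold pdist prb
  rw [Finset.sum_comm]
  refine Finset.sum_congr rfl fun ω _ => ?_
  by_cases h : Y ω = y <;> simp [Prod.ext_iff, h, Finset.sum_ite_eq]

lemma pdist_comp {Ω α γ : Type*} [Fintype Ω] [Fintype α] (μ : Ω → ℝ)
    (X : Ω → α) (h : α → γ) (z : γ) :
    pdist μ (fun ω => h (X ω)) z = ∑ x, if h x = z then pdist μ X x else 0 := by
  unfold pdist prb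
  have key : ∀ x : α, (if h x = z then ∑ ω, if ω ∈ {ω | X ω = x} then μ ω else 0 else 0)
      = ∑ ω, if X ω = x ∧ h x = z then μ ω else 0 := by
    intro x
    by_cases hc : h x = z <;> simp [hc]
  rw [Finset.sum_congr rfl fun x _ => key x, Finset.sum_comm]
  refine Finset.sum_congr rfl fun ω _ => ?_
  rw [Finset.sum_eq_single (X ω)]
  · by_cases hz : h (X ω) = z <;> simp [hz]
  · intro x _ hx; simp [Ne.symm hx]
  · simp

lemma pdist_pair_comp {Ω α β γ : Type*} [Fintype Ω] [Fintype β] (μ : Ω → ℝ)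
    (X : Ω → α) (Y : Ω → β) (h : β → γ) (x : α) (z : γ) :
    pdist μ (fun ω => (X ω, h (Y ω))) (x, z)
      = ∑ y, if h y = z then pdist μ (fun ω => (X ω, Y ω)) (x, y) else 0 := by
  unfold pdist prb
  simp only [Set.mem_setOf_eq, Prod.mk.injEq]
  have key : ∀ y : β,
      (if h y = z then ∑ ω, if X ω = x ∧ Y ω = y then μ ω else 0 else 0)
      = ∑ ω, if (X ω = x ∧ Y ω = y) ∧ h y = z then μ ω else 0 := by
    intro y
    by_cases hc : h y = z <;> simp [hc]
  simp only [key]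
  rw [Finset.sum_comm]
  refine Finset.sum_congr rfl fun ω _ => ?_
  rw [Finset.sum_eq_single (Y ω)]
  · by_cases hz : h (Y ω) = z <;> by_cases hx : X ω = x <;> simp [hz, hx]
  · intro y _ hy; simp [Ne.symm hy]
  · simp

lemma condH_eq {Ω α β : Type*} [Fintype Ω] [Fintype α] [Fintype β] (μ : Ω → ℝ)
    (hμ0 : ∀ ω, 0 ≤ μ ω) (X : Ω → α) (Y : Ω → β) :
    condH μ X Y = -∑ y, ∑ x, pdist μ (fun ω => (X ω, Y ω)) (x, y) *
      Real.log (cprob μ {ω | X ω = x} {ω | Y ω = y}) := by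
  have hJ : ∀ x y, 0 ≤ pdist μ (fun ω => (X ω, Y ω)) (x, y) :=
    fun x y => pdist_nonneg hμ0 _ _
  have hle : ∀ x y, pdist μ (fun ω => (X ω, Y ω)) (x, y) ≤ pdist μ Y y := by
    intro x y
    rw [← marginal μ X Y y]
    exact Finset.single_le_sum (fun x' _ => hJ x' y) (Finset.mem_univ x)
  have hc : ∀ x y, cprob μ {ω | X ω = x} {ω | Y ω = y}
      = pdist μ (fun ω => (X ω, Y ω)) (x, y) / pdist μ Y y := by
    intro x y
    unfold cprob
    rw [← pdist_pair_eq_prb_inter]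
    rfl
  have h1 : Hent μ (fun ω => (X ω, Y ω))
      = -∑ y, ∑ x, pdist μ (fun ω => (X ω, Y ω)) (x, y) *
          Real.log (pdist μ (fun ω => (X ω, Y ω)) (x, y)) := by
    unfold Hent
    rw [Fintype.sum_prod_type, Finset.sum_comm]
  have h2 : Hent μ Y = -∑ y, ∑ x, pdist μ (fun ω => (X ω, Y ω)) (x, y) *
      Real.log (pdist μ Y y) := by
    unfold Hent
    congr 1
    refine Finset.sum_congr rfl fun y _ => ?_
    rw [← marginal μ X Y y, Finset.sum_mul]
  unfold condH
  rw [h1, h2, neg_sub_neg, ← Finset.sum_sub_distrib, ← Finset.sum_neg_distrib]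
  refine Finset.sum_congr rfl fun y _ => ?_
  rw [← Finset.sum_sub_distrib, ← Finset.sum_neg_distrib]
  refine Finset.sum_congr rfl fun x _ => ?_
  rw [hc x y]
  by_cases h0 : pdist μ (fun ω => (X ω, Y ω)) (x, y) = 0
  · simp [h0]
  · have hpos : 0 < pdist μ (fun ω => (X ω, Y ω)) (x, y) := lt_of_le_of_ne (hJ x y) (Ne.symm h0)
    have hY : 0 < pdist μ Y y := lt_of_lt_of_le hpos (hle x y)
    rw [Real.log_div h0 (ne_of_gt hY)]
    ring


/-- the conditional entropy of the future given the past equals the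
conditional entropy of the future given the causal state: `H[F|P] = H[F|ε∘P]`. -/
theorem condEntropy_past_eq_condEntropy_causalState {Ω Pst Fut : Type*}
    [Fintype Ω] [Fintype Pst] [Fintype Fut]
    (μ : Ω → ℝ) (hμ0 : ∀ ω, 0 ≤ μ ω) (hμ1 : ∑ ω, μ ω = 1)
    (P : Ω → Pst) (F : Ω → Fut)
    (hP : ∀ p : Pst, 0 < prb μ {ω | P ω = p}) :
    condH μ F P = condH μ F (fun ω => causalState μ P F (P ω)) := by
  classical
  have hPpos : ∀ p, 0 < pdist μ P p := hP
  -- joint = cond prob * marginal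
  have hcJ : ∀ (f : Fut) (p : Pst),
      cprob μ {ω | F ω = f} {ω | P ω = p} * pdist μ P p
        = pdist μ (fun ω => (F ω, P ω)) (f, p) := by
    intro f p
    unfold cprob
    rw [← pdist_pair_eq_prb_inter]
    exact div_mul_cancel₀ _ (hPpos p).ne'
  -- positivity of causal-state marginal
  have hD : ∀ p : Pst, 0 < pdist μ (fun ω => causalState μ P F (P ω)) (causalState μ P F p) := by
    intro p
    rw [pdist_comp μ P (causalState μ P F) (causalState μ P F p)]
    refine Finset.sum_pos' (fun p' _ => ?_) ⟨p, Finset.mem_univ p, ?_⟩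
    · by_cases h : causalState μ P F p' = causalState μ P F p <;>
        simp [h, pdist_nonneg hμ0 P p']
    · rw [if_pos rfl]
      exact hPpos p
  -- key: conditional distribution given the causal state equals that given any representative
  have keym : ∀ (f : Fut) (p : Pst),
      cprob μ {ω | F ω = f} {ω | causalState μ P F (P ω) = causalState μ P F p}
        = cprob μ {ω | F ω = f} {ω | P ω = p} := by
    intro f p
    rw [cprob]
    have hnum : prb μ ({ω | F ω = f} ∩ {ω | causalState μ P F (P ω) = causalState μ P F p})
        = cprob μ {ω | F ω = f} {ω | P ω = p}
            * pdist μ (fun ω => causalState μ P F (P ω)) (causalState μ P F p) := by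
      rw [← pdist_pair_eq_prb_inter μ F (fun ω => causalState μ P F (P ω))]
      rw [pdist_pair_comp μ F P (causalState μ P F) f (causalState μ P F p)]
      rw [pdist_comp μ P (causalState μ P F) (causalState μ P F p), Finset.mul_sum]
      refine Finset.sum_congr rfl fun p' _ => ?_
      by_cases h : causalState μ P F p' = causalState μ P F p
      · rw [if_pos h, if_pos h, ← hcJ f p']
        have hequiv : CausalEquiv μ P F p' p := Quotient.exact h
        rw [hequiv f]
      · simp [h]
    have hden : prb μ {ω | causalState μ P F (P ω) = causalState μ P F p}
        = pdist μ (fun ω => causalState μ P F (P ω)) (causalState μ P F p) := rfl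
    rw [hnum, hden, mul_div_assoc, div_self (hD p).ne', mul_one]
  -- main computation
  rw [condH_eq μ hμ0 F P, condH_eq μ hμ0 F (fun ω => causalState μ P F (P ω))]
  congr 1
  rw [← Finset.sum_fiberwise Finset.univ (fun p => causalState μ P F p)
      (fun p => ∑ f, pdist μ (fun ω => (F ω, P ω)) (f, p) *
        Real.log (cprob μ {ω | F ω = f} {ω | P ω = p}))]
  refine Finset.sum_congr rfl fun s _ => ?_
  rw [Finset.sum_comm]
  refine Finset.sum_congr rfl fun f _ => ?_
  have hterm : ∀ p ∈ Finset.univ.filter (fun p => causalState μ P F p = s),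
      pdist μ (fun ω => (F ω, P ω)) (f, p) *
        Real.log (cprob μ {ω | F ω = f} {ω | P ω = p})
      = pdist μ (fun ω => (F ω, P ω)) (f, p) *
        Real.log (cprob μ {ω | F ω = f} {ω | (fun ω => causalState μ P F (P ω)) ω = s}) := by
    intro p hp
    have hps : causalState μ P F p = s := (Finset.mem_filter.mp hp).2
    subst hps
    rw [keym f p]
  rw [Finset.sum_congr rfl hterm, ← Finset.sum_mul]
  congr 1
  rw [pdist_pair_comp μ F P (causalState μ P F) f s, Finset.sum_filter]
  refine Finset.sum_congr rfl fun a _ => ?_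
  by_cases h : causalState μ P F a = s <;> simp [h]
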